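/- Let N, M, L ∈ ℕ with L ≥ 1 and M ≥ 1, and for each j ∈ {1,…,M} and v ∈ {1,…,N} let P_v^j ⊆ {1,…,N}. Define g_j(x) = (1/N) ∑_{v=1}^N (1 − ∏_{i∈P_v^j}(1−x_i)), the influence objective f(x) = (1/M) ∑_{j=1}^M log(1 + g_j(x)), and its polynomial estimator f̂_L(x) = (1/M) ∑_{j=1}^M ĥ_L(g_j(x)), where ĥ_L(s) = log(3/2) + ∑_{ℓ=1}^L ((−1)^{ℓ−1}/ℓ)(2/3)^ℓ (s−1/2)^ℓ is the degree-L Taylor polynomial of log(1+s) around 1/2. Let G and Ĝ_L be the multilinear extensions of f and f̂_L restricted to {0,1}^N, with gradients ∇G(y)_i = G([y]_{+i}) − G([y]_{−i}) and similarly for Ĝ_L. Then for every y ∈ [0,1]^N, ‖∇G(y) − ∇Ĝ_L(y)‖₂ ≤ √N / ((L+1) · 2^L). -/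

import Mathlib

/-- The indicator vector of a subset `S` of `{1,…,N}`, viewed as a point of `{0,1}^N ⊆ ℝ^N`. -/
noncomputable def ind {N : ℕ} (S : Finset (Fin N)) : Fin N → ℝ :=
  fun i => if i ∈ S then 1 else 0

/-- `∏_{i∈S} y_i ∏_{i∉S} (1 - y_i)`. -/
noncomputable def wt {N : ℕ} (y : Fin N → ℝ) (S : Finset (Fin N)) : ℝ :=
  (∏ i ∈ S, y i) * ∏ i ∈ Sᶜ, (1 - y i)

/-- The multilinear extension `G(y) = ∑_{x∈{0,1}^N} f(x) ∏_{i:x_i=1} y_i ∏_{i:x_i=0}(1-y_i)`. -/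
noncomputable def mlext {N : ℕ} (f : (Fin N → ℝ) → ℝ) (y : Fin N → ℝ) : ℝ :=
  ∑ S : Finset (Fin N), f (ind S) * wt y S

/-- `∇G(y)_i = G([y]_{+i}) - G([y]_{-i})`. -/
noncomputable def gradML {N : ℕ} (f : (Fin N → ℝ) → ℝ) (y : Fin N → ℝ) (i : Fin N) : ℝ :=
  mlext f (Function.update y i 1) - mlext f (Function.update y i 0)

/-- Euclidean norm on `ℝ^N`. -/
noncomputable def norm2 {N : ℕ} (v : Fin N → ℝ) : ℝ :=
  Real.sqrt (∑ i, v i ^ 2)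

section Aux
open Finset Real

lemma log_tail (L : ℕ) {x : ℝ} (h : |x| < 1) :
    |Real.log (1 - x) + ∑ i ∈ range L, x ^ (i + 1) / (i + 1)| ≤
      |x| ^ (L + 1) / ((L + 1) * (1 - |x|)) := by
  have H := Real.hasSum_pow_div_log_of_abs_lt_one h
  have Htail : HasSum (fun n : ℕ => x ^ (n + L + 1) / (n + L + 1))
      (-Real.log (1 - x) - ∑ i ∈ range L, x ^ (i + 1) / (i + 1)) := by
    have := (hasSum_nat_add_iff' (f := fun n : ℕ => x ^ (n + 1) / (n + 1)) L).2 H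
    convert this using 2 with n
    case e'_3 => rfl
    push_cast; ring_nf
  set c : ℝ := |x| ^ (L + 1) / (L + 1) with hc
  have hc0 : 0 ≤ c := by positivity
  have Hg : HasSum (fun n : ℕ => c * |x| ^ n) (c * (1 - |x|)⁻¹) :=
    (hasSum_geometric_of_lt_one (abs_nonneg x) h).mul_left c
  have hbound : ∀ n : ℕ, |x ^ (n + L + 1) / ((n : ℝ) + L + 1)| ≤ c * |x| ^ n := by
    intro n
    have h1 : (0:ℝ) < (L:ℝ) + 1 := by positivity
    have h2 : (0:ℝ) < (n:ℝ) + L + 1 := by positivity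
    rw [abs_div, abs_pow, abs_of_pos h2]
    rw [hc, div_mul_eq_mul_div]
    have : |x| ^ (n + L + 1) = |x| ^ (L + 1) * |x| ^ n := by
      rw [← pow_add]; ring_nf
    rw [this]
    apply div_le_div_of_nonneg_left ?_ h1 ?_ |>.trans_eq ?_
    · positivity
    · linarith
    · ring
  have hsumf : Summable (fun n : ℕ => |x ^ (n + L + 1) / ((n : ℝ) + L + 1)|) :=
    Summable.of_nonneg_of_le (fun n => abs_nonneg _) hbound Hg.summable
  have key : |(-Real.log (1 - x) - ∑ i ∈ range L, x ^ (i + 1) / (i + 1))| ≤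
      c * (1 - |x|)⁻¹ := by
    rw [← Htail.tsum_eq]
    calc |∑' n : ℕ, x ^ (n + L + 1) / ((n : ℝ) + L + 1)|
        ≤ ∑' n : ℕ, |x ^ (n + L + 1) / ((n : ℝ) + L + 1)| := by
          have := norm_tsum_le_tsum_norm (f := fun n : ℕ => x ^ (n + L + 1) / ((n : ℝ) + L + 1)) (by simpa only [Real.norm_eq_abs] using hsumf)
          simpa only [Real.norm_eq_abs] using this
      _ ≤ ∑' n : ℕ, c * |x| ^ n := Summable.tsum_le_tsum hbound hsumf Hg.summable
      _ = c * (1 - |x|)⁻¹ := Hg.tsum_eq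
  have heq : c * (1 - |x|)⁻¹ = |x| ^ (L + 1) / ((L + 1) * (1 - |x|)) := by
    rw [hc]; field_simp
  rw [← heq]
  calc |Real.log (1 - x) + ∑ i ∈ range L, x ^ (i + 1) / (i + 1)|
      = |(-Real.log (1 - x) - ∑ i ∈ range L, x ^ (i + 1) / (i + 1))| := by
        rw [← abs_neg]; congr 1; ring
      _ ≤ c * (1 - |x|)⁻¹ := key

lemma hhat_err (L : ℕ) {s : ℝ} (hs : s ∈ Set.Icc (0:ℝ) 1) :
    |Real.log (1 + s) - (Real.log (3 / 2) +
      ∑ ℓ ∈ Finset.Icc 1 L, ((-1 : ℝ) ^ (ℓ - 1) / (ℓ : ℝ)) * (2 / 3) ^ ℓ * (s - 1 / 2) ^ ℓ)| ≤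
      1 / (2 * (((L : ℝ) + 1) * 2 ^ L)) := by
  obtain ⟨hs0, hs1⟩ := hs
  set x : ℝ := -((2/3) * (s - 1/2)) with hx
  have hxabs : |x| ≤ 1/3 := by
    rw [hx, abs_neg, abs_mul]
    have : |s - 1/2| ≤ 1/2 := by rw [abs_le]; constructor <;> linarith
    have h23 : |(2/3 : ℝ)| = 2/3 := by norm_num
    rw [h23]; linarith
  have hxlt : |x| < 1 := by linarith
  have hlog : Real.log (1 - x) = Real.log (1 + s) - Real.log (3/2) := by
    have h1x : (1 : ℝ) - x = (2/3) * (1 + s) := by rw [hx]; ring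
    rw [h1x, Real.log_mul (by norm_num) (by linarith)]
    have : Real.log (2/3 : ℝ) = - Real.log (3/2 : ℝ) := by
      rw [← Real.log_inv]; norm_num
    rw [this]; ring
  have hsum : ∑ i ∈ range L, x ^ (i + 1) / (i + 1) =
      -∑ ℓ ∈ Finset.Icc 1 L, ((-1 : ℝ) ^ (ℓ - 1) / (ℓ : ℝ)) * (2/3) ^ ℓ * (s - 1/2) ^ ℓ := by
    rw [← Finset.Ico_add_one_right_eq_Icc, Finset.sum_Ico_eq_sum_range]
    simp only [Nat.add_sub_cancel_left, Nat.succ_sub_one]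
    rw [← Finset.sum_neg_distrib]
    apply Finset.sum_congr rfl
    intro i _
    have hxp : x ^ (i + 1) = (-1 : ℝ) ^ (i + 1) * ((2/3) * (s - 1/2)) ^ (i + 1) := by
      rw [hx, ← neg_one_mul, mul_pow]
    rw [hxp]
    push_cast
    rw [mul_pow, pow_succ (-1 : ℝ) i]
    ring
  have key := log_tail L hxlt
  rw [hsum, hlog] at key
  have hexpr : Real.log (1 + s) - Real.log (3/2) +
      -∑ ℓ ∈ Finset.Icc 1 L, ((-1 : ℝ) ^ (ℓ - 1) / (ℓ : ℝ)) * (2/3) ^ ℓ * (s - 1/2) ^ ℓ =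
      Real.log (1 + s) - (Real.log (3/2) +
      ∑ ℓ ∈ Finset.Icc 1 L, ((-1 : ℝ) ^ (ℓ - 1) / (ℓ : ℝ)) * (2/3) ^ ℓ * (s - 1/2) ^ ℓ) := by ring
  rw [hexpr] at key
  refine key.trans ?_
  have hL1 : (0:ℝ) < (L:ℝ) + 1 := by positivity
  calc |x| ^ (L + 1) / (((L:ℝ) + 1) * (1 - |x|))
      ≤ (1/3 : ℝ) ^ (L + 1) / (((L:ℝ) + 1) * (2/3)) := by
        gcongr
        all_goals first | exact abs_nonneg x | exact hxabs | linarith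
      _ = 1 / (2 * (((L:ℝ) + 1) * 3 ^ L)) := by
        rw [div_pow]; field_simp; ring
      _ ≤ 1 / (2 * (((L:ℝ) + 1) * 2 ^ L)) := by
        gcongr
        all_goals norm_num

lemma wt_nonneg {N : ℕ} {y : Fin N → ℝ} (hy : ∀ i, y i ∈ Set.Icc (0:ℝ) 1)
    (S : Finset (Fin N)) : 0 ≤ wt y S := by
  apply mul_nonneg
  · exact Finset.prod_nonneg fun i _ => (hy i).1
  · exact Finset.prod_nonneg fun i _ => by linarith [(hy i).2]

lemma sum_wt {N : ℕ} (y : Fin N → ℝ) : ∑ S : Finset (Fin N), wt y S = 1 := by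
  have := Finset.prod_add (f := y) (g := fun i => 1 - y i) (s := Finset.univ)
  have h1 : ∀ i ∈ (Finset.univ : Finset (Fin N)), y i + (1 - y i) = 1 := fun i _ => by ring
  rw [Finset.prod_congr rfl h1, Finset.prod_const_one] at this
  rw [this, Finset.powerset_univ]
  apply Finset.sum_congr rfl
  intro S _
  rw [wt, Finset.compl_eq_univ_sdiff]

lemma mlext_diff {N : ℕ} {f g : (Fin N → ℝ) → ℝ} {y : Fin N → ℝ}
    (hy : ∀ i, y i ∈ Set.Icc (0:ℝ) 1) {δ : ℝ}
    (h : ∀ S : Finset (Fin N), |f (ind S) - g (ind S)| ≤ δ) :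
    |mlext f y - mlext g y| ≤ δ := by
  have : mlext f y - mlext g y = ∑ S : Finset (Fin N), (f (ind S) - g (ind S)) * wt y S := by
    rw [mlext, mlext, ← Finset.sum_sub_distrib]
    apply Finset.sum_congr rfl; intro S _; ring
  rw [this]
  calc |∑ S : Finset (Fin N), (f (ind S) - g (ind S)) * wt y S|
      ≤ ∑ S : Finset (Fin N), |(f (ind S) - g (ind S)) * wt y S| := Finset.abs_sum_le_sum_abs _ _
    _ ≤ ∑ S : Finset (Fin N), δ * wt y S := by
        apply Finset.sum_le_sum
        intro S _
        rw [abs_mul, abs_of_nonneg (wt_nonneg hy S)]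
        exact mul_le_mul_of_nonneg_right (h S) (wt_nonneg hy S)
    _ = δ := by rw [← Finset.mul_sum, sum_wt]; ring

lemma gj_mem {N : ℕ} (Pj : Fin N → Finset (Fin N)) (S : Finset (Fin N)) :
    (1 / (N:ℝ)) * ∑ v : Fin N, (1 - ∏ i ∈ Pj v, (1 - ind S i)) ∈ Set.Icc (0:ℝ) 1 := by
  have ht : ∀ v : Fin N, (0:ℝ) ≤ 1 - ∏ i ∈ Pj v, (1 - ind S i) ∧
      1 - ∏ i ∈ Pj v, (1 - ind S i) ≤ 1 := by
    intro v
    have hfac : ∀ i ∈ Pj v, (0:ℝ) ≤ 1 - ind S i ∧ (1 - ind S i) ≤ 1 := by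
      intro i _
      unfold ind
      by_cases h : i ∈ S <;> simp [h]
    constructor
    · have := Finset.prod_le_one (fun i hi => (hfac i hi).1) (fun i hi => (hfac i hi).2)
      linarith
    · have := Finset.prod_nonneg (fun i hi => (hfac i hi).1)
      linarith
  have hsum0 : (0:ℝ) ≤ ∑ v : Fin N, (1 - ∏ i ∈ Pj v, (1 - ind S i)) :=
    Finset.sum_nonneg fun v _ => (ht v).1
  have hsumN : ∑ v : Fin N, (1 - ∏ i ∈ Pj v, (1 - ind S i)) ≤ (N:ℝ) := by
    calc ∑ v : Fin N, (1 - ∏ i ∈ Pj v, (1 - ind S i)) ≤ ∑ _v : Fin N, (1:ℝ) :=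
          Finset.sum_le_sum fun v _ => (ht v).2
      _ = (N:ℝ) := by simp
  rcases Nat.eq_zero_or_pos N with hN | hN
  · subst hN
    simp
  · have hNpos : (0:ℝ) < N := by exact_mod_cast hN
    constructor
    · positivity
    · calc (1 / (N:ℝ)) * ∑ v : Fin N, (1 - ∏ i ∈ Pj v, (1 - ind S i))
          ≤ (1 / (N:ℝ)) * N := by
            apply mul_le_mul_of_nonneg_left hsumN (by positivity)
        _ = 1 := by field_simp

end Aux

/-- for the influence-maximization objective
`f(x) = (1/M) ∑_{j=1}^M log(1 + g_j(x))` with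
`g_j(x) = (1/N) ∑_{v=1}^N (1 - ∏_{i∈P_v^j}(1 - x_i))`, and its polynomial estimator
`f̂_L(x) = (1/M) ∑_{j=1}^M ĥ_L(g_j(x))` with `ĥ_L` the degree-`L` Taylor polynomial of
`log(1+s)` at `1/2`, the gradients of the multilinear extensions satisfy
`‖∇G(y) - ∇Ĝ_L(y)‖₂ ≤ √N / ((L+1)·2^L)` for all `y ∈ [0,1]^N`. -/
theorem influence_bias_bound {N M : ℕ} (L : ℕ) (hL : 1 ≤ L) (hM : 1 ≤ M)
    (P : Fin M → Fin N → Finset (Fin N))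
    (f fhat : (Fin N → ℝ) → ℝ)
    (hf : ∀ x : Fin N → ℝ, f x = (1 / (M : ℝ)) * ∑ j : Fin M,
      Real.log (1 + (1 / (N : ℝ)) * ∑ v : Fin N, (1 - ∏ i ∈ P j v, (1 - x i))))
    (hfhat : ∀ x : Fin N → ℝ, fhat x = (1 / (M : ℝ)) * ∑ j : Fin M, (Real.log (3 / 2) +
      ∑ ℓ ∈ Finset.Icc 1 L, ((-1 : ℝ) ^ (ℓ - 1) / (ℓ : ℝ)) * (2 / 3) ^ ℓ *
        (((1 / (N : ℝ)) * ∑ v : Fin N, (1 - ∏ i ∈ P j v, (1 - x i))) - 1 / 2) ^ ℓ))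
    (y : Fin N → ℝ) (hy : ∀ i, y i ∈ Set.Icc (0 : ℝ) 1) :
    norm2 (fun i => gradML f y i - gradML fhat y i) ≤
      Real.sqrt (N : ℝ) / (((L : ℝ) + 1) * 2 ^ L) := by
  set δ : ℝ := 1 / (2 * (((L : ℝ) + 1) * 2 ^ L)) with hδdef
  have hδ0 : 0 ≤ δ := by positivity
  -- vertex bound
  have hvert : ∀ S : Finset (Fin N), |f (ind S) - fhat (ind S)| ≤ δ := by
    intro S
    rw [hf, hfhat, ← mul_sub, ← Finset.sum_sub_distrib]
    rw [abs_mul]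
    have hMpos : (0:ℝ) < M := by exact_mod_cast hM
    have h1M : |1 / (M:ℝ)| = 1 / M := by
      rw [abs_of_pos (by positivity)]
    rw [h1M]
    calc (1 / (M:ℝ)) * |∑ j : Fin M, (Real.log (1 + (1 / (N : ℝ)) *
            ∑ v : Fin N, (1 - ∏ i ∈ P j v, (1 - ind S i))) -
          (Real.log (3 / 2) + ∑ ℓ ∈ Finset.Icc 1 L, ((-1 : ℝ) ^ (ℓ - 1) / (ℓ : ℝ)) * (2 / 3) ^ ℓ *
            (((1 / (N : ℝ)) * ∑ v : Fin N, (1 - ∏ i ∈ P j v, (1 - ind S i))) - 1 / 2) ^ ℓ))|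
        ≤ (1 / (M:ℝ)) * ∑ j : Fin M, δ := by
          apply mul_le_mul_of_nonneg_left ?_ (by positivity)
          refine (Finset.abs_sum_le_sum_abs _ _).trans ?_
          apply Finset.sum_le_sum
          intro j _
          exact hhat_err L (gj_mem (P j) S)
      _ = δ := by
          rw [Finset.sum_const]
          simp only [Finset.card_univ, Fintype.card_fin, nsmul_eq_mul]
          field_simp
  -- coordinate bound on gradient difference
  have hcoord : ∀ i : Fin N, |gradML f y i - gradML fhat y i| ≤ 2 * δ := by
    intro i
    have hy1 : ∀ k, Function.update y i (1:ℝ) k ∈ Set.Icc (0:ℝ) 1 := by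
      intro k
      rcases eq_or_ne k i with rfl | hk
      · simp
      · rw [Function.update_of_ne hk]; exact hy k
    have hy0 : ∀ k, Function.update y i (0:ℝ) k ∈ Set.Icc (0:ℝ) 1 := by
      intro k
      rcases eq_or_ne k i with rfl | hk
      · simp
      · rw [Function.update_of_ne hk]; exact hy k
    have h1 := mlext_diff hy1 hvert
    have h0 := mlext_diff hy0 hvert
    rw [gradML, gradML]
    have : mlext f (Function.update y i 1) - mlext f (Function.update y i 0) -
        (mlext fhat (Function.update y i 1) - mlext fhat (Function.update y i 0)) =
        (mlext f (Function.update y i 1) - mlext fhat (Function.update y i 1)) -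
        (mlext f (Function.update y i 0) - mlext fhat (Function.update y i 0)) := by ring
    rw [this]
    calc |(mlext f (Function.update y i 1) - mlext fhat (Function.update y i 1)) -
          (mlext f (Function.update y i 0) - mlext fhat (Function.update y i 0))|
        ≤ |mlext f (Function.update y i 1) - mlext fhat (Function.update y i 1)| +
          |mlext f (Function.update y i 0) - mlext fhat (Function.update y i 0)| :=
            abs_sub _ _
      _ ≤ 2 * δ := by linarith
  -- norm bound
  rw [norm2]
  have hsum : ∑ i : Fin N, (gradML f y i - gradML fhat y i) ^ 2 ≤ (N:ℝ) * (2*δ)^2 := by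
    calc ∑ i : Fin N, (gradML f y i - gradML fhat y i) ^ 2
        ≤ ∑ _i : Fin N, (2*δ)^2 := by
          apply Finset.sum_le_sum
          intro i _
          have h := hcoord i
          have := abs_nonneg (gradML f y i - gradML fhat y i)
          nlinarith [sq_abs (gradML f y i - gradML fhat y i)]
      _ = (N:ℝ) * (2*δ)^2 := by simp [mul_comm]
  calc Real.sqrt (∑ i : Fin N, (gradML f y i - gradML fhat y i) ^ 2)
      ≤ Real.sqrt ((N:ℝ) * (2*δ)^2) := Real.sqrt_le_sqrt hsum
    _ = Real.sqrt (N:ℝ) * (2*δ) := by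
        rw [Real.sqrt_mul (Nat.cast_nonneg N), Real.sqrt_sq (by positivity)]
    _ = Real.sqrt (N : ℝ) / (((L : ℝ) + 1) * 2 ^ L) := by
        rw [hδdef]; field_simp
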